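/- Fix integers k ≥ 0 and n ≥ 5k+5. Then (i) every semi-arc k-visibility graph on n vertices has at most (k+1)(4n−k−2)/2 edges, and (ii) there exists a semi-arc k-visibility representation on n vertices whose semi-arc k-visibility graph has exactly (k+1)(4n−k−2)/2 edges. Hence the maximum number of edges in a semi-arc k-visibility graph with n ≥ 5k+5 vertices is (k+1)(2n−(k+2)/2), and this bound is optimal. -/

import Mathlib

open Real

/-- `β = α + π` reduced mod `2π` (for `α ∈ [0, 2π)`). -/
noncomputable def oppositeAngle (α : ℝ) : ℝ :=
  if α + π < 2 * π then α + π else α + π - 2 * π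

/-- Adjacency condition for `i < j` in a semi-arc `k`-visibility representation
given by the angles `θ`: either a radial line of sight not through the center
crossing at most `k` intervening arcs (a), or a line of sight through the center
crossing at most `k` other arcs (b). -/
def semiArcAdj (k : ℕ) {n : ℕ} (θ : Fin n → ℝ) (i j : Fin n) : Prop :=
  ({m : Fin n | i < m ∧ m < j ∧ min (θ i) (θ j) < θ m}.ncard ≤ k)
  ∨ ∃ α : ℝ, 0 ≤ α ∧ α < 2 * π ∧ α ≤ θ i ∧ oppositeAngle α ≤ θ j ∧
      ({m : Fin n | (m < i ∧ α ≤ θ m) ∨ (m < j ∧ m ≠ i ∧ oppositeAngle α ≤ θ m)}.ncard ≤ k)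

/-- The semi-arc `k`-visibility graph of the representation given by angles `θ`. -/
def semiArcGraph (k : ℕ) {n : ℕ} (θ : Fin n → ℝ) : SimpleGraph (Fin n) :=
  SimpleGraph.fromRel (fun i j => i < j ∧ semiArcAdj k θ i j)

section Part1
open Real
namespace SemiArcAux

/-- blocker set of a through-center line of sight -/
def blockSet {n : ℕ} (θ : Fin n → ℝ) (i j : Fin n) (α : ℝ) : Set (Fin n) :=
  {m : Fin n | (m < i ∧ α ≤ θ m) ∨ (m < j ∧ m ≠ i ∧ oppositeAngle α ≤ θ m)}

/-- radial blocker set -/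
def radSet {n : ℕ} (θ : Fin n → ℝ) (i j : Fin n) : Set (Fin n) :=
  {m : Fin n | i < m ∧ m < j ∧ min (θ i) (θ j) < θ m}

lemma opp_lt (α : ℝ) (h : α < π) : oppositeAngle α = α + π := by
  unfold oppositeAngle; rw [if_pos]; linarith

lemma opp_ge (α : ℝ) (h : π ≤ α) : oppositeAngle α = α - π := by
  unfold oppositeAngle
  rw [if_neg (by push_neg; linarith)]
  ring

lemma blockSet_mono {n : ℕ} (θ : Fin n → ℝ) (i j : Fin n) {α β : ℝ}
    (h1 : α ≤ β) (h2 : oppositeAngle α ≤ oppositeAngle β) :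
    blockSet θ i j β ⊆ blockSet θ i j α := by
  intro m hm
  rcases hm with ⟨h3, h4⟩ | ⟨h3, h4, h5⟩
  · exact Or.inl ⟨h3, le_trans h1 h4⟩
  · exact Or.inr ⟨h3, h4, le_trans h2 h5⟩

/-- The existential through-center condition reduces to two canonical candidates. -/
lemma adjB_iff {k n : ℕ} (θ : Fin n → ℝ) (hθ : ∀ m, θ m ∈ Set.Ioo 0 (2*π)) (i j : Fin n) :
    (∃ α : ℝ, 0 ≤ α ∧ α < 2 * π ∧ α ≤ θ i ∧ oppositeAngle α ≤ θ j ∧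
      (blockSet θ i j α).ncard ≤ k)
    ↔ (π ≤ θ j ∧ (blockSet θ i j (min (θ i) (θ j - π))).ncard ≤ k)
      ∨ (π ≤ θ i ∧ (blockSet θ i j (min (θ j) (θ i - π) + π)).ncard ≤ k) := by
  have hpi : (0:ℝ) < π := Real.pi_pos
  constructor
  · rintro ⟨α, ha0, ha2, hai, haj, hcard⟩
    by_cases hlt : α < π
    · left
      rw [opp_lt α hlt] at haj
      have hπj : π ≤ θ j := by linarith
      refine ⟨hπj, le_trans (Set.ncard_le_ncard ?_ (Set.toFinite _)) hcard⟩
      apply blockSet_mono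
      · exact le_min hai (by linarith)
      · have hu : min (θ i) (θ j - π) < π := lt_of_le_of_lt (min_le_right _ _)
          (by have := (hθ j).2; linarith)
        rw [opp_lt _ hlt, opp_lt _ hu]
        have : α ≤ min (θ i) (θ j - π) := le_min hai (by linarith)
        linarith
    · right
      push_neg at hlt
      rw [opp_ge α hlt] at haj
      have hπi : π ≤ θ i := le_trans hlt hai
      refine ⟨hπi, le_trans (Set.ncard_le_ncard ?_ (Set.toFinite _)) hcard⟩
      have hv0 : 0 ≤ min (θ j) (θ i - π) := le_min (le_of_lt (hθ j).1) (by linarith)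
      apply blockSet_mono
      · have : α - π ≤ min (θ j) (θ i - π) := le_min haj (by linarith)
        linarith
      · rw [opp_ge α hlt, opp_ge _ (by linarith : π ≤ min (θ j) (θ i - π) + π)]
        simp only [add_sub_cancel_right]
        exact le_min haj (by linarith)
  · rintro (⟨hπj, hcard⟩ | ⟨hπi, hcard⟩)
    · set u := min (θ i) (θ j - π) with hu
      have hu0 : 0 ≤ u := le_min (le_of_lt (hθ i).1) (by linarith)
      have huπ : u < π := lt_of_le_of_lt (min_le_right _ _) (by have := (hθ j).2; linarith)
      exact ⟨u, hu0, by have := (hθ i).2; calc u ≤ θ i := min_le_left _ _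
              _ < 2*π := this,
             min_le_left _ _, by rw [opp_lt _ huπ]; have := min_le_right (θ i) (θ j - π); linarith,
             hcard⟩
    · set v := min (θ j) (θ i - π) with hv
      have hv0 : 0 ≤ v := le_min (le_of_lt (hθ j).1) (by linarith)
      have hvπ : v < π := lt_of_le_of_lt (min_le_right _ _) (by have := (hθ i).2; linarith)
      refine ⟨v + π, by linarith, by linarith, ?_, ?_, hcard⟩
      · have := min_le_right (θ j) (θ i - π); linarith
      · rw [opp_ge _ (by linarith : π ≤ v + π)]
        simp only [add_sub_cancel_right]
        exact min_le_left _ _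
/-- a case-II certificate implies radial adjacency. -/
lemma caseII_imp {k n : ℕ} (θ : Fin n → ℝ) (hθ : ∀ m, θ m ∈ Set.Ioo 0 (2*π))
    (i j : Fin n) (hij : i < j) (hπi : π ≤ θ i)
    (h : (blockSet θ i j (min (θ j) (θ i - π) + π)).ncard ≤ k) :
    (radSet θ i j).ncard ≤ k := by
  refine le_trans (Set.ncard_le_ncard ?_ (Set.toFinite _)) h
  intro m hm
  obtain ⟨h1, h2, h3⟩ := hm
  have hv0 : 0 ≤ min (θ j) (θ i - π) := le_min (le_of_lt (hθ j).1) (by linarith)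
  right
  refine ⟨h2, ne_of_gt h1, ?_⟩
  rw [opp_ge _ (by linarith : π ≤ min (θ j) (θ i - π) + π)]
  simp only [add_sub_cancel_right]
  have hpi : (0:ℝ) < π := Real.pi_pos
  have : min (θ j) (θ i - π) ≤ min (θ i) (θ j) :=
    le_min (le_trans (min_le_right _ _) (by linarith)) (min_le_left _ _)
  linarith

/-- Full characterization of adjacency for `i < j`. -/
lemma adj_iff {k n : ℕ} (θ : Fin n → ℝ) (hθ : ∀ m, θ m ∈ Set.Ioo 0 (2*π))
    (i j : Fin n) (hij : i < j) :
    (semiArcGraph k θ).Adj i j ↔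
      (radSet θ i j).ncard ≤ k ∨
      (π ≤ θ j ∧ (blockSet θ i j (min (θ i) (θ j - π))).ncard ≤ k) := by
  have hne : i ≠ j := ne_of_lt hij
  constructor
  · intro h
    rw [semiArcGraph, SimpleGraph.fromRel_adj] at h
    obtain ⟨-, h | h⟩ := h
    · obtain ⟨-, h⟩ := h
      rcases h with h | h
      · exact Or.inl h
      · replace h : ∃ α : ℝ, 0 ≤ α ∧ α < 2 * π ∧ α ≤ θ i ∧ oppositeAngle α ≤ θ j ∧
            (blockSet θ i j α).ncard ≤ k := h
        rw [adjB_iff θ hθ i j] at h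
        rcases h with h | ⟨h1, h2⟩
        · exact Or.inr h
        · exact Or.inl (caseII_imp θ hθ i j hij h1 h2)
    · exact absurd h.1 (not_lt.mpr (le_of_lt hij))
  · intro h
    rw [semiArcGraph, SimpleGraph.fromRel_adj]
    refine ⟨hne, Or.inl ⟨hij, ?_⟩⟩
    rcases h with h | h
    · exact Or.inl h
    · exact Or.inr ((adjB_iff θ hθ i j).mpr (Or.inl h))

end SemiArcAux

end Part1
section Part2
open Finset
namespace SemiArcAux

variable {n : ℕ}

lemma ncard_lt_of_insert_subset {A B : Set (Fin n)} {x : Fin n}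
    (hx : x ∉ A) (h : insert x A ⊆ B) : A.ncard < B.ncard := by
  have h2 := Set.ncard_le_ncard h (Set.toFinite _)
  rwa [Set.ncard_insert_of_notMem hx (Set.toFinite _), Nat.add_one_le_iff] at h2

lemma ncard_val {P : Fin n → Prop} (Q : ℕ → Prop) [DecidablePred Q]
    (h : ∀ m : Fin n, P m ↔ Q m.val) :
    {m : Fin n | P m}.ncard = ((Finset.range n).filter Q).card := by
  classical
  have h1 : {m : Fin n | P m} = ↑(Finset.univ.filter (fun m : Fin n => Q m.val)) := by
    ext m; simp [h m]
  rw [h1, Set.ncard_coe_finset]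
  apply Finset.card_bij (fun m _ => m.val)
  · intro a ha
    simp only [mem_filter, mem_univ, true_and] at ha
    simp [a.isLt, ha]
  · intro a _ b _ hab; exact Fin.ext hab
  · intro x hx
    simp only [mem_filter, mem_range] at hx
    exact ⟨⟨x, hx.1⟩, by simp [hx.2], rfl⟩

lemma card_filter_fin_le (c : ℕ) (hc : c < n) :
    (Finset.univ.filter (fun v : Fin n => (v : ℕ) ≤ c)).card = c + 1 := by
  rw [show c + 1 = (Finset.range (c+1)).card from (Finset.card_range _).symm]
  apply Finset.card_bij (fun (v : Fin n) _ => (v : ℕ))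
  · intro a ha
    simp only [mem_filter, mem_univ, true_and] at ha
    simp [mem_range]; omega
  · intro a _ b _ hab; exact Fin.ext hab
  · intro x hx
    simp only [mem_range] at hx
    exact ⟨⟨x, by omega⟩, by simp; omega, rfl⟩

/-- the graph-edge-set cardinality as a count of ordered pairs -/
lemma edgeSet_ncard (G : SimpleGraph (Fin n)) [DecidableRel G.Adj] :
    G.edgeSet.ncard =
    (Finset.univ.filter (fun p : Fin n × Fin n => p.1 < p.2 ∧ G.Adj p.1 p.2)).card := by
  classical
  rw [Set.ncard_eq_toFinset_card']
  rw [← SimpleGraph.edgeFinset]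
  symm
  apply Finset.card_bij (fun (p : Fin n × Fin n) _ => Sym2.mk p.1 p.2)
  · intro p hp
    simp only [mem_filter] at hp
    rw [SimpleGraph.mem_edgeFinset]
    exact hp.2.2
  · intro p hp q hq hpq
    simp only [mem_filter, mem_univ, true_and] at hp hq
    rcases p with ⟨a, b⟩; rcases q with ⟨c, d⟩
    rw [Sym2.eq_iff] at hpq
    rcases hpq with ⟨h1, h2⟩ | ⟨h1, h2⟩
    · exact Prod.ext h1 h2
    · exfalso; subst h1; subst h2; exact absurd hq.1 (not_lt.mpr (le_of_lt hp.1))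
  · intro e he
    rw [SimpleGraph.mem_edgeFinset] at he
    induction e with
    | _ a b =>
      rw [SimpleGraph.mem_edgeSet] at he
      rcases lt_trichotomy a b with h | h | h
      · exact ⟨(a, b), by simp [h, he], rfl⟩
      · exact absurd he (by simp [h])
      · exact ⟨(b, a), by simp [h, he.symm], Sym2.eq_swap⟩

end SemiArcAux
end Part2
section Part3
open Finset
namespace SemiArcAux

variable {n : ℕ} (θ : Fin n → ℝ)

/-- `D`-set: arcs below `v` with larger angle. -/
def Dset (v : Fin n) : Set (Fin n) := {m : Fin n | m < v ∧ θ v < θ m}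

lemma R_mono (i j j' : Fin n) (hij : i < j) (hjj' : j < j')
    (h1 : θ i < θ j) (h2 : θ i < θ j') :
    (radSet θ i j).ncard < (radSet θ i j').ncard := by
  apply ncard_lt_of_insert_subset (x := j)
  · rintro ⟨-, hm, -⟩; exact lt_irrefl j hm
  · rintro m (rfl | ⟨ha, hb, hc⟩)
    · exact ⟨hij, hjj', by rw [min_eq_left h2.le]; exact h1⟩
    · refine ⟨ha, lt_trans hb hjj', ?_⟩
      rw [min_eq_left h2.le]; rw [min_eq_left h1.le] at hc; exact hc

lemma L_mono (i i' j : Fin n) (hij : i < j) (hii' : i < i') (hi'j : i' < j)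
    (h1 : θ j < θ i) (h2 : θ j < θ i') :
    (radSet θ i' j).ncard < (radSet θ i j).ncard := by
  apply ncard_lt_of_insert_subset (x := i')
  · rintro ⟨hm, -, -⟩; exact lt_irrefl i' hm
  · rintro m (rfl | ⟨ha, hb, hc⟩)
    · exact ⟨hii', hi'j, by rw [min_eq_right h1.le]; exact h2⟩
    · refine ⟨lt_trans hii' ha, hb, ?_⟩
      rw [min_eq_right h1.le]; rw [min_eq_right h2.le] at hc; exact hc

lemma L_lt_D (i j : Fin n) (hij : i < j) (h1 : θ j < θ i) :
    (radSet θ i j).ncard < (Dset θ j).ncard := by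
  apply ncard_lt_of_insert_subset (x := i)
  · rintro ⟨hm, -, -⟩; exact lt_irrefl i hm
  · rintro m (rfl | ⟨ha, hb, hc⟩)
    · exact ⟨hij, h1⟩
    · exact ⟨hb, by rw [min_eq_right h1.le] at hc; exact hc⟩

lemma D_le_cI (i j : Fin n) :
    (Dset θ i).ncard ≤ (blockSet θ i j (min (θ i) (θ j - π))).ncard := by
  apply Set.ncard_le_ncard _ (Set.toFinite _)
  rintro m ⟨hm1, hm2⟩
  exact Or.inl ⟨hm1, le_of_lt (lt_of_le_of_lt (min_le_left _ _) hm2)⟩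

lemma Bbeta_val_lt {k : ℕ} (hinj : Function.Injective θ) (i j : Fin n) (hij : i < j)
    (hπj : π ≤ θ j) (h2π : θ j < 2*π) (hbr : θ j - π < θ i)
    (hcI : (blockSet θ i j (min (θ i) (θ j - π))).ncard ≤ k)
    (hPa : ¬ (radSet θ i j).ncard ≤ k) : θ i < θ j := by
  by_contra hcon
  push_neg at hcon
  have hne : θ j ≠ θ i := fun h => (ne_of_lt hij) (hinj h.symm)
  have hlt : θ j < θ i := lt_of_le_of_ne hcon hne
  apply hPa
  refine le_trans (Set.ncard_le_ncard ?_ (Set.toFinite _)) hcI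
  rintro m ⟨ha, hb, hc⟩
  rw [min_eq_right hlt.le] at hc
  refine Or.inr ⟨hb, ne_of_gt ha, ?_⟩
  rw [min_eq_right hbr.le, opp_lt _ (by linarith)]
  linarith

lemma D_le_cbeta (i j : Fin n) (hπj : π ≤ θ j) (h2π : θ j < 2*π)
    (hval : θ i < θ j) (hbr : θ j - π < θ i) :
    (Dset θ j).ncard ≤ (blockSet θ i j (min (θ i) (θ j - π))).ncard := by
  apply Set.ncard_le_ncard _ (Set.toFinite _)
  rintro m ⟨hm1, hm2⟩
  rw [min_eq_right hbr.le]
  by_cases hmi : m < i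
  · exact Or.inl ⟨hmi, by linarith [Real.pi_pos]⟩
  · refine Or.inr ⟨hm1, fun he => by rw [he] at hm2; linarith, ?_⟩
    rw [opp_lt _ (by linarith)]
    linarith

lemma Bbeta_det (i i' j : Fin n) (hii' : i < i') (hi'j : i' < j)
    (hπj : π ≤ θ j) (h2π : θ j < 2*π) (hbr : θ j - π < θ i) (hbr' : θ j - π < θ i')
    (hval' : θ i' < θ j) :
    (blockSet θ i j (min (θ i) (θ j - π))).ncard <
      (blockSet θ i' j (min (θ i') (θ j - π))).ncard := by
  rw [min_eq_right hbr.le, min_eq_right hbr'.le]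
  apply ncard_lt_of_insert_subset (x := i)
  · rintro (⟨hm, -⟩ | ⟨-, hm, -⟩)
    · exact lt_irrefl i hm
    · exact hm rfl
  · rintro m (rfl | (⟨h1, h2⟩ | ⟨h1, h2, h3⟩))
    · exact Or.inl ⟨hii', hbr.le⟩
    · exact Or.inl ⟨lt_trans h1 hii', h2⟩
    · by_cases hmi' : m < i'
      · refine Or.inl ⟨hmi', ?_⟩
        rw [opp_lt _ (by linarith)] at h3; linarith
      · refine Or.inr ⟨h1, fun he => ?_, h3⟩
        rw [he, opp_lt _ (by linarith)] at h3; linarith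

lemma Balpha_det (i j j' : Fin n) (hij : i < j) (hjj' : j < j')
    (h2π : θ j < 2*π) (hbr : θ i ≤ θ j - π) (hbr' : θ i ≤ θ j' - π) :
    (blockSet θ i j (min (θ i) (θ j - π))).ncard <
      (blockSet θ i j' (min (θ i) (θ j' - π))).ncard := by
  rw [min_eq_left hbr, min_eq_left hbr']
  apply ncard_lt_of_insert_subset (x := j)
  · rintro (⟨hm, -⟩ | ⟨hm, -, -⟩)
    · exact absurd hij (not_lt.mpr hm.le)
    · exact lt_irrefl j hm
  · rintro m (rfl | (⟨h1, h2⟩ | ⟨h1, h2, h3⟩))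
    · refine Or.inr ⟨hjj', ne_of_gt hij, ?_⟩
      rw [opp_lt _ (by linarith)]; linarith
    · exact Or.inl ⟨h1, h2⟩
    · exact Or.inr ⟨lt_trans h1 hjj', h2, h3⟩

end SemiArcAux
end Part3
section Part4
set_option maxRecDepth 100000
set_option maxHeartbeats 1600000
open Finset
namespace SemiArcAux

lemma TR_card (k n : ℕ) (hkn : k + 2 ≤ n) :
    2 * ((Finset.univ ×ˢ Finset.range (k+1)).filter
        (fun p : Fin n × ℕ => (p.1 : ℕ) + p.2 ≤ n - 2)).card = (k+1) * (2*n - 2 - k) := by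
  classical
  have h1 : ((Finset.univ ×ˢ Finset.range (k+1)).filter
        (fun p : Fin n × ℕ => (p.1 : ℕ) + p.2 ≤ n - 2)).card
      = ∑ t ∈ Finset.range (k+1), (n - 1 - t) := by
    rw [Finset.card_eq_sum_card_fiberwise (f := fun p => p.2) (t := Finset.range (k+1))
      (fun p hp => by
        simp only [Finset.mem_coe, mem_filter, mem_product, mem_range] at hp
        simp [hp.1.2])]
    apply Finset.sum_congr rfl
    intro t ht
    rw [Finset.mem_range] at ht
    have h2 : (((Finset.univ ×ˢ Finset.range (k+1)).filter
        (fun p : Fin n × ℕ => (p.1 : ℕ) + p.2 ≤ n - 2)).filter (fun p => p.2 = t)).card =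
        (Finset.univ.filter (fun v : Fin n => (v : ℕ) ≤ n - 2 - t)).card := by
      apply Finset.card_bij (fun p _ => p.1)
      · intro p hp
        simp only [mem_filter, mem_product, mem_range] at hp
        simp only [mem_filter, mem_univ, true_and]
        omega
      · intro p hp q hq hpq
        simp only [mem_filter] at hp hq
        exact Prod.ext hpq (hp.2.trans hq.2.symm)
      · intro v hv
        simp only [mem_filter, mem_univ, true_and] at hv
        refine ⟨(v, t), ?_, rfl⟩
        simp only [mem_filter, mem_product, mem_range, mem_univ, true_and]
        exact ⟨⟨by omega, by omega⟩, trivial⟩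
    rw [h2, card_filter_fin_le (n - 2 - t) (by omega)]
    omega
  rw [h1]
  have h2 : ∑ t ∈ Finset.range (k+1), (n - 1 - t)
      = ∑ t ∈ Finset.range (k+1), ((n - 1 - k) + t) := by
    rw [← Finset.sum_range_reflect]
    apply Finset.sum_congr rfl
    intro t ht
    rw [Finset.mem_range] at ht
    omega
  rw [h2, Finset.sum_add_distrib, Finset.sum_const, Finset.card_range, smul_eq_mul]
  have h3 := Finset.sum_range_id_mul_two (k+1)
  calc 2 * ((k+1) * (n-1-k) + ∑ t ∈ Finset.range (k+1), t)
      = (k+1) * (2*(n-1-k)) + (∑ t ∈ Finset.range (k+1), t) * 2 := by ring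
    _ = (k+1) * (2*(n-1-k)) + (k+1) * k := by rw [h3]; congr 1
    _ = (k+1) * (2*(n-1-k) + k) := by ring
    _ = (k+1) * (2*n - 2 - k) := by congr 1; omega


end SemiArcAux
end Part4
section Part4b
set_option maxRecDepth 100000
set_option maxHeartbeats 1600000
open Finset
namespace SemiArcAux
theorem upper_bound (k n : ℕ) (hn : 5*k+5 ≤ n) (θ : Fin n → ℝ)
    (hinj : Function.Injective θ) (hθ : ∀ i, θ i ∈ Set.Ioo 0 (2*π)) :
    2 * (semiArcGraph k θ).edgeSet.ncard ≤ (k + 1) * (4 * n - k - 2) := by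
  classical
  have hpi : (0:ℝ) < π := Real.pi_pos
  rw [@edgeSet_ncard n (semiArcGraph k θ) (Classical.decRel _)]
  set F := Finset.univ.filter
    (fun p : Fin n × Fin n => p.1 < p.2 ∧ (semiArcGraph k θ).Adj p.1 p.2) with hF
  have hmem : ∀ p : Fin n × Fin n, p ∈ F → p.1 < p.2 ∧ (semiArcGraph k θ).Adj p.1 p.2 := by
    intro p hp; simpa [hF] using hp
  have hchar : ∀ p : Fin n × Fin n, p ∈ F →
      (radSet θ p.1 p.2).ncard ≤ k ∨
      (π ≤ θ p.2 ∧ (blockSet θ p.1 p.2 (min (θ p.1) (θ p.2 - π))).ncard ≤ k) := by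
    intro p hp
    obtain ⟨h1, h2⟩ := hmem p hp
    exact (adj_iff θ hθ p.1 p.2 h1).mp h2
  have hPabound : ∀ i j : Fin n, i < j → (radSet θ i j).ncard + (i : ℕ) + 2 ≤ n := by
    intro i j hlt
    have hsub : radSet θ i j ⊆ {m : Fin n | i < m ∧ m < j} := by
      rintro m ⟨h1, h2, -⟩; exact ⟨h1, h2⟩
    have h2 : {m : Fin n | i < m ∧ m < j}.ncard
        = ((Finset.range n).filter (fun x => (i : ℕ) < x ∧ x < (j : ℕ))).card :=
      ncard_val _ (fun m => Iff.rfl)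
    have h3 : ((Finset.range n).filter (fun x => (i : ℕ) < x ∧ x < (j : ℕ)))
        = Finset.Ico ((i : ℕ)+1) (j : ℕ) := by
      ext x
      simp only [mem_filter, mem_range, Finset.mem_Ico]
      have := j.isLt
      omega
    have h4 := Set.ncard_le_ncard hsub (Set.toFinite _)
    rw [h2, h3, Nat.card_Ico] at h4
    have h5 := j.isLt
    have h6 : (i : ℕ) < (j : ℕ) := hlt
    omega
  -- the label function
  set lab := fun p : Fin n × Fin n =>
    @ite _ ((radSet θ p.1 p.2).ncard ≤ k) (Classical.propDecidable _)
      (@ite _ (θ p.1 < θ p.2) (Classical.propDecidable _)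
        (Sum.inl ((p.1, (radSet θ p.1 p.2).ncard) : Fin n × ℕ))
        (Sum.inr ((p.2, (radSet θ p.1 p.2).ncard) : Fin n × ℕ)))
      (@ite _ (θ p.1 ≤ θ p.2 - π) (Classical.propDecidable _)
        (Sum.inr ((p.1, (blockSet θ p.1 p.2 (min (θ p.1) (θ p.2 - π))).ncard) : Fin n × ℕ))
        (Sum.inr ((p.2, (blockSet θ p.1 p.2 (min (θ p.1) (θ p.2 - π))).ncard) : Fin n × ℕ))) with hlab
  have hmapsto : ∀ p ∈ F, lab p ∈
      ((Finset.univ ×ˢ Finset.range (k+1)).filter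
        (fun p : Fin n × ℕ => (p.1 : ℕ) + p.2 ≤ n - 2)).map ⟨Sum.inl, Sum.inl_injective⟩
      ∪ ((Finset.univ ×ˢ Finset.range (k+1)) : Finset (Fin n × ℕ)).map
          ⟨Sum.inr, Sum.inr_injective⟩ := by
    intro p hp
    obtain ⟨hlt, hadj⟩ := hmem p hp
    rw [Finset.mem_union]
    by_cases hA : (radSet θ p.1 p.2).ncard ≤ k
    · by_cases hV : θ p.1 < θ p.2
      · left
        simp only [hlab, if_pos hA, if_pos hV, Finset.mem_map,
          Function.Embedding.coeFn_mk]
        refine ⟨(p.1, (radSet θ p.1 p.2).ncard), ?_, rfl⟩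
        simp only [mem_filter, mem_product, mem_univ, mem_range, true_and]
        have := hPabound p.1 p.2 hlt
        exact ⟨by omega, by omega⟩
      · right
        simp only [hlab, if_pos hA, if_neg hV, Finset.mem_map,
          Function.Embedding.coeFn_mk]
        refine ⟨(p.2, (radSet θ p.1 p.2).ncard), ?_, rfl⟩
        simp only [mem_product, mem_univ, mem_range, true_and]
        omega
    · have hC := (hchar p hp).resolve_left hA
      by_cases hV : θ p.1 ≤ θ p.2 - π
      · right
        simp only [hlab, if_neg hA, if_pos hV, Finset.mem_map,
          Function.Embedding.coeFn_mk]
        refine ⟨(p.1, (blockSet θ p.1 p.2 (min (θ p.1) (θ p.2 - π))).ncard), ?_, rfl⟩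
        simp only [mem_product, mem_univ, mem_range, true_and]
        have := hC.2
        omega
      · right
        simp only [hlab, if_neg hA, if_neg hV, Finset.mem_map,
          Function.Embedding.coeFn_mk]
        refine ⟨(p.2, (blockSet θ p.1 p.2 (min (θ p.1) (θ p.2 - π))).ncard), ?_, rfl⟩
        simp only [mem_product, mem_univ, mem_range, true_and]
        have := hC.2
        omega
  have hinjOn : ∀ p ∈ F, ∀ q ∈ F, lab p = lab q → p = q := by
    rintro ⟨p1, p2⟩ hp ⟨q1, q2⟩ hq he
    obtain ⟨hplt, hpadj⟩ := hmem _ hp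
    obtain ⟨hqlt, hqadj⟩ := hmem _ hq
    simp only at hplt hqlt
    have hpne : θ p1 ≠ θ p2 := fun h => (ne_of_lt hplt) (hinj h)
    have hqne : θ q1 ≠ θ q2 := fun h => (ne_of_lt hqlt) (hinj h)
    by_cases hpA : (radSet θ p1 p2).ncard ≤ k
    · by_cases hpV : θ p1 < θ p2
      · -- p is R
        by_cases hqA : (radSet θ q1 q2).ncard ≤ k
        · by_cases hqV : θ q1 < θ q2
          · simp only [hlab, if_pos hpA, if_pos hpV, if_pos hqA, if_pos hqV,
              Sum.inl.injEq, Prod.mk.injEq] at he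
            obtain ⟨he1, he2⟩ := he
            subst he1
            have he3 : p2 = q2 := by
              by_contra hne
              rcases lt_or_gt_of_ne hne with h | h
              · exact absurd he2 (ne_of_lt (R_mono θ p1 p2 q2 hplt h hpV hqV))
              · exact absurd he2 (ne_of_gt (R_mono θ p1 q2 p2 hqlt h hqV hpV))
            rw [he3]
          · simp only [hlab, if_pos hpA, if_pos hpV, if_pos hqA, if_neg hqV] at he
            exact absurd he (by simp)
        · rcases le_or_gt (θ q1) (θ q2 - π) with hqV | hqV
          · simp only [hlab, if_pos hpA, if_pos hpV, if_neg hqA, if_pos hqV] at he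
            exact absurd he (by simp)
          · simp only [hlab, if_pos hpA, if_pos hpV, if_neg hqA,
              if_neg (not_le.mpr hqV)] at he
            exact absurd he (by simp)
      · -- p is L
        have hpVlt : θ p2 < θ p1 := lt_of_le_of_ne (not_lt.mp hpV) (Ne.symm hpne)
        by_cases hqA : (radSet θ q1 q2).ncard ≤ k
        · by_cases hqV : θ q1 < θ q2
          · simp only [hlab, if_pos hpA, if_neg hpV, if_pos hqA, if_pos hqV] at he
            exact absurd he (by simp)
          · have hqVlt : θ q2 < θ q1 := lt_of_le_of_ne (not_lt.mp hqV) (Ne.symm hqne)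
            simp only [hlab, if_pos hpA, if_neg hpV, if_pos hqA, if_neg hqV,
              Sum.inr.injEq, Prod.mk.injEq] at he
            obtain ⟨he1, he2⟩ := he
            subst he1
            have he3 : p1 = q1 := by
              by_contra hne
              rcases lt_or_gt_of_ne hne with h | h
              · exact absurd he2 (ne_of_gt (L_mono θ p1 q1 p2 hplt h hqlt hpVlt hqVlt))
              · exact absurd he2 (ne_of_lt (L_mono θ q1 p1 p2 hqlt h hplt hqVlt hpVlt))
            rw [he3]
        · -- q is B
          have hqC := (hchar _ hq).resolve_left hqA
          simp only at hqC
          by_cases hqV : θ q1 ≤ θ q2 - π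
          · simp only [hlab, if_pos hpA, if_neg hpV, if_neg hqA, if_pos hqV,
              Sum.inr.injEq, Prod.mk.injEq] at he
            obtain ⟨he1, he2⟩ := he
            exfalso
            have h1 := L_lt_D θ p1 p2 hplt hpVlt
            have h2 := D_le_cI θ q1 q2
            rw [he1] at h1 he2
            omega
          · have hqVgt : θ q2 - π < θ q1 := not_le.mp hqV
            simp only [hlab, if_pos hpA, if_neg hpV, if_neg hqA, if_neg hqV,
              Sum.inr.injEq, Prod.mk.injEq] at he
            obtain ⟨he1, he2⟩ := he
            exfalso
            have hq2pi : θ q2 < 2*π := (hθ q2).2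
            have hqval : θ q1 < θ q2 :=
              Bbeta_val_lt θ hinj q1 q2 hqlt hqC.1 hq2pi hqVgt hqC.2 hqA
            have h1 := L_lt_D θ p1 p2 hplt hpVlt
            have h2 := D_le_cbeta θ q1 q2 hqC.1 hq2pi hqval hqVgt
            rw [he1] at h1 he2
            omega
    · -- p is B
      have hpC := (hchar _ hp).resolve_left hpA
      simp only at hpC
      by_cases hqA : (radSet θ q1 q2).ncard ≤ k
      · by_cases hqV : θ q1 < θ q2
        · rcases le_or_gt (θ p1) (θ p2 - π) with hpV | hpV
          · simp only [hlab, if_neg hpA, if_pos hpV, if_pos hqA, if_pos hqV] at he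
            exact absurd he (by simp)
          · simp only [hlab, if_neg hpA, if_neg (not_le.mpr hpV), if_pos hqA,
              if_pos hqV] at he
            exact absurd he (by simp)
        · -- q is L, p is B
          have hqVlt : θ q2 < θ q1 := lt_of_le_of_ne (not_lt.mp hqV) (Ne.symm hqne)
          by_cases hpV : θ p1 ≤ θ p2 - π
          · simp only [hlab, if_neg hpA, if_pos hpV, if_pos hqA, if_neg hqV,
              Sum.inr.injEq, Prod.mk.injEq] at he
            obtain ⟨he1, he2⟩ := he
            exfalso
            have h1 := L_lt_D θ q1 q2 hqlt hqVlt
            have h2 : (Dset θ q2).ncard ≤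
                (blockSet θ p1 p2 (min (θ p1) (θ p2 - π))).ncard := by
              rw [← he1]; exact D_le_cI θ p1 p2
            omega
          · have hpVgt : θ p2 - π < θ p1 := not_le.mp hpV
            simp only [hlab, if_neg hpA, if_neg hpV, if_pos hqA, if_neg hqV,
              Sum.inr.injEq, Prod.mk.injEq] at he
            obtain ⟨he1, he2⟩ := he
            exfalso
            have hp2pi : θ p2 < 2*π := (hθ p2).2
            have hpval : θ p1 < θ p2 :=
              Bbeta_val_lt θ hinj p1 p2 hplt hpC.1 hp2pi hpVgt hpC.2 hpA
            have h1 := L_lt_D θ q1 q2 hqlt hqVlt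
            have h2 : (Dset θ q2).ncard ≤
                (blockSet θ p1 p2 (min (θ p1) (θ p2 - π))).ncard := by
              rw [← he1]; exact D_le_cbeta θ p1 p2 hpC.1 hp2pi hpval hpVgt
            omega
      · -- both B
        have hqC := (hchar _ hq).resolve_left hqA
        simp only at hqC
        by_cases hpV : θ p1 ≤ θ p2 - π
        · by_cases hqV : θ q1 ≤ θ q2 - π
          · simp only [hlab, if_neg hpA, if_pos hpV, if_neg hqA, if_pos hqV,
              Sum.inr.injEq, Prod.mk.injEq] at he
            obtain ⟨he1, he2⟩ := he
            subst he1
            have he3 : p2 = q2 := by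
              by_contra hne
              rcases lt_or_gt_of_ne hne with h | h
              · exact absurd he2
                  (ne_of_lt (Balpha_det θ p1 p2 q2 hplt h (hθ p2).2 hpV hqV))
              · exact absurd he2
                  (ne_of_gt (Balpha_det θ p1 q2 p2 hqlt h (hθ q2).2 hqV hpV))
            rw [he3]
          · simp only [hlab, if_neg hpA, if_pos hpV, if_neg hqA, if_neg hqV,
              Sum.inr.injEq, Prod.mk.injEq] at he
            obtain ⟨he1, he2⟩ := he
            exfalso
            have h1 : θ p1 < π := by have := (hθ p2).2; linarith
            have h2 : π ≤ θ q2 := hqC.1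
            rw [← he1] at h2
            linarith
        · have hpVgt : θ p2 - π < θ p1 := not_le.mp hpV
          by_cases hqV : θ q1 ≤ θ q2 - π
          · simp only [hlab, if_neg hpA, if_neg hpV, if_neg hqA, if_pos hqV,
              Sum.inr.injEq, Prod.mk.injEq] at he
            obtain ⟨he1, he2⟩ := he
            exfalso
            have h1 : θ q1 < π := by have := (hθ q2).2; linarith
            have h2 : π ≤ θ p2 := hpC.1
            rw [he1] at h2
            linarith
          · have hqVgt : θ q2 - π < θ q1 := not_le.mp hqV
            simp only [hlab, if_neg hpA, if_neg hpV, if_neg hqA, if_neg hqV,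
              Sum.inr.injEq, Prod.mk.injEq] at he
            obtain ⟨he1, he2⟩ := he
            rw [he1] at hplt hpVgt hpC he2
            have hq2pi : θ q2 < 2*π := (hθ q2).2
            have hpval : θ p1 < θ q2 :=
              Bbeta_val_lt θ hinj p1 q2 hplt hpC.1 hq2pi hpVgt hpC.2 ?hpA2
            case hpA2 => rw [he1] at hpA; exact hpA
            have hqval : θ q1 < θ q2 :=
              Bbeta_val_lt θ hinj q1 q2 hqlt hqC.1 hq2pi hqVgt hqC.2 hqA
            have he3 : p1 = q1 := by
              by_contra hne
              rcases lt_or_gt_of_ne hne with h | h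
              · exact absurd he2 (ne_of_lt
                  (Bbeta_det θ p1 q1 q2 h hqlt hqC.1 hq2pi hpVgt hqVgt hqval))
              · exact absurd he2 (ne_of_gt
                  (Bbeta_det θ q1 p1 q2 h hplt hqC.1 hq2pi hqVgt hpVgt hpval))
            simp [he3, he1]
  -- conclude
  have hcard := Finset.card_le_card_of_injOn lab hmapsto hinjOn
  have hcard2 : F.card ≤
      ((Finset.univ ×ˢ Finset.range (k+1)).filter
        (fun p : Fin n × ℕ => (p.1 : ℕ) + p.2 ≤ n - 2)).card + n * (k+1) := by
    refine le_trans hcard (le_trans (Finset.card_union_le _ _) ?_)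
    rw [Finset.card_map, Finset.card_map, Finset.card_product, Finset.card_univ,
      Fintype.card_fin, Finset.card_range]
  have hTRcard := TR_card k n (by omega)
  have harith : (k+1) * (2*n - 2 - k) + 2 * (n * (k+1)) = (k+1) * (4*n - k - 2) := by
    have h1 : (2*n - 2 - k) + 2*n = 4*n - k - 2 := by omega
    calc (k+1) * (2*n - 2 - k) + 2 * (n * (k+1))
        = (k+1) * ((2*n - 2 - k) + 2*n) := by ring
      _ = (k+1) * (4*n - k - 2) := by rw [h1]
  omega

end SemiArcAux
end Part4b
section Part5
open Finset
namespace SemiArcAux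

variable {n : ℕ}

/-- angle units for the extremal construction -/
def cc (k n : ℕ) (i : Fin n) : ℕ :=
  if (i : ℕ) < 2*k+2 then 2*(i : ℕ)+2 else 2*(i : ℕ) + (4*n - (4*k+4)) + 1

noncomputable def θc (k n : ℕ) : Fin n → ℝ := fun i => (cc k n i : ℝ) * (π / (4*n))

variable {k : ℕ} (hn : 5*k+5 ≤ n)

lemma hδpos (hn : 5*k+5 ≤ n) : (0:ℝ) < π / (4*n) := by
  apply div_pos Real.pi_pos
  have : 0 < n := by omega
  positivity

lemma unit_le_unit (hn : 5*k+5 ≤ n) (a b : ℕ) :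
    (a : ℝ) * (π / (4*n)) ≤ (b : ℝ) * (π / (4*n)) ↔ a ≤ b := by
  rw [mul_le_mul_iff_left₀ (hδpos hn), Nat.cast_le]

lemma unit_lt_unit (hn : 5*k+5 ≤ n) (a b : ℕ) :
    (a : ℝ) * (π / (4*n)) < (b : ℝ) * (π / (4*n)) ↔ a < b := by
  rw [mul_lt_mul_iff_left₀ (hδpos hn), Nat.cast_lt]

lemma pi_eq_unit (hn : 5*k+5 ≤ n) : π = ((4*n : ℕ) : ℝ) * (π / (4*n)) := by
  have h : (4*(n:ℝ)) ≠ 0 := by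
    have : 0 < n := by omega
    positivity
  have hn0 : (n:ℝ) ≠ 0 := by exact_mod_cast (show n ≠ 0 by omega)
  push_cast
  field_simp

lemma two_pi_eq_unit (hn : 5*k+5 ≤ n) : 2*π = ((8*n : ℕ) : ℝ) * (π / (4*n)) := by
  have h : (4*(n:ℝ)) ≠ 0 := by
    have : 0 < n := by omega
    positivity
  have hn0 : (n:ℝ) ≠ 0 := by exact_mod_cast (show n ≠ 0 by omega)
  push_cast
  field_simp
  ring

lemma cc_cases (i : Fin n) :
    ((i : ℕ) < 2*k+2 ∧ cc k n i = 2*(i : ℕ)+2) ∨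
    (2*k+2 ≤ (i : ℕ) ∧ cc k n i = 2*(i : ℕ) + (4*n - (4*k+4)) + 1) := by
  by_cases h : (i : ℕ) < 2*k+2
  · exact Or.inl ⟨h, by rw [cc, if_pos h]⟩
  · exact Or.inr ⟨by omega, by rw [cc, if_neg h]⟩

lemma cc_mono (hn : 5*k+5 ≤ n) (i j : Fin n) (hij : i < j) : cc k n i < cc k n j := by
  have h1 := cc_cases (k := k) i
  have h2 := cc_cases (k := k) j
  have h3 : (i : ℕ) < (j : ℕ) := hij
  have h4 := j.isLt
  rcases h1 with ⟨a1, b1⟩ | ⟨a1, b1⟩ <;> rcases h2 with ⟨a2, b2⟩ | ⟨a2, b2⟩ <;>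
    rw [b1, b2] <;> omega

lemma θc_mono (hn : 5*k+5 ≤ n) : StrictMono (θc k n) := by
  intro i j hij
  exact (unit_lt_unit hn _ _).mpr (cc_mono hn i j hij)

lemma θc_inj (hn : 5*k+5 ≤ n) : Function.Injective (θc k n) := (θc_mono hn).injective

lemma θc_mem (hn : 5*k+5 ≤ n) : ∀ i, θc k n i ∈ Set.Ioo (0:ℝ) (2*π) := by
  intro i
  constructor
  · have h1 : 0 < cc k n i := by
      rcases cc_cases (k := k) i with ⟨-, b⟩ | ⟨-, b⟩ <;> rw [b] <;> omega
    exact mul_pos (by exact_mod_cast h1) (hδpos hn)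
  · have h2 : cc k n i < 8*n := by
      have h4 := i.isLt
      rcases cc_cases (k := k) i with ⟨-, b⟩ | ⟨-, b⟩ <;> rw [b] <;> omega
    rw [two_pi_eq_unit hn]
    exact (unit_lt_unit hn _ _).mpr h2

lemma pi_le_θc (hn : 5*k+5 ≤ n) (j : Fin n) : π ≤ θc k n j ↔ 4*n ≤ cc k n j := by
  rw [← unit_le_unit hn (4*n) (cc k n j), ← pi_eq_unit hn]
  exact Iff.rfl

lemma ncard_val_Ico (a b : ℕ) (hb : b ≤ n) :
    {m : Fin n | a ≤ (m : ℕ) ∧ (m : ℕ) < b}.ncard = b - a := by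
  classical
  rw [ncard_val (fun x => a ≤ x ∧ x < b) (fun m => Iff.rfl)]
  have h1 : (Finset.range n).filter (fun x => a ≤ x ∧ x < b) = Finset.Ico a b := by
    ext x
    simp only [mem_filter, mem_range, Finset.mem_Ico]
    omega
  rw [h1, Nat.card_Ico]

lemma radSet_count (hn : 5*k+5 ≤ n) (i j : Fin n) (hij : i < j) :
    (radSet (θc k n) i j).ncard = (j : ℕ) - (i : ℕ) - 1 := by
  have h1 : radSet (θc k n) i j = {m : Fin n | (i : ℕ) + 1 ≤ (m : ℕ) ∧ (m : ℕ) < (j : ℕ)} := by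
    ext m
    simp only [radSet, Set.mem_setOf_eq]
    constructor
    · rintro ⟨h1, h2, -⟩
      exact ⟨h1, h2⟩
    · rintro ⟨h1, h2⟩
      have hm : i < m := h1
      refine ⟨hm, h2, ?_⟩
      rw [min_eq_left (le_of_lt (θc_mono hn hij))]
      exact θc_mono hn hm
  rw [h1, ncard_val_Ico _ _ (le_of_lt j.isLt)]
  omega

/-- blockSet in units -/
lemma blockSet_c (hn : 5*k+5 ≤ n) (i j : Fin n) (U : ℕ) (hU : U < 4*n) :
    blockSet (θc k n) i j ((U : ℝ) * (π / (4*n))) =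
    {m : Fin n | ((m : ℕ) < (i : ℕ) ∧ U ≤ cc k n m) ∨
      ((m : ℕ) < (j : ℕ) ∧ (m : ℕ) ≠ (i : ℕ) ∧ U + 4*n ≤ cc k n m)} := by
  have hne : (n:ℝ) ≠ 0 := Nat.cast_ne_zero.mpr (by omega)
  have hopp : oppositeAngle ((U : ℝ) * (π / (4*n))) = ((U + 4*n : ℕ) : ℝ) * (π / (4*n)) := by
    rw [opp_lt]
    · push_cast
      field_simp
    · have h2 : (U:ℝ) * (π / (4*n)) < ((4*n : ℕ):ℝ) * (π / (4*n)) :=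
        (unit_lt_unit hn _ _).mpr hU
      rw [← pi_eq_unit hn] at h2
      exact h2
  ext m
  simp only [blockSet, Set.mem_setOf_eq, hopp]
  rw [show θc k n m = ((cc k n m : ℕ) : ℝ) * (π / (4*n)) from rfl]
  rw [unit_le_unit hn, unit_le_unit hn]
  constructor
  · rintro (⟨h1, h2⟩ | ⟨h1, h2, h3⟩)
    · exact Or.inl ⟨h1, h2⟩
    · exact Or.inr ⟨h1, fun he => h2 (Fin.ext he), h3⟩
  · rintro (⟨h1, h2⟩ | ⟨h1, h2, h3⟩)
    · exact Or.inl ⟨h1, h2⟩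
    · exact Or.inr ⟨h1, fun he => h2 (congrArg Fin.val he), h3⟩

end SemiArcAux
end Part5
section Part6
open Finset
namespace SemiArcAux

variable {n k : ℕ}

lemma unit_min (hn : 5*k+5 ≤ n) (a b : ℕ) :
    min ((a:ℝ) * (π / (4*n))) ((b:ℝ) * (π / (4*n))) = ((min a b : ℕ):ℝ) * (π / (4*n)) := by
  rcases le_total a b with h | h
  · rw [min_eq_left ((unit_le_unit hn a b).mpr h), min_eq_left h]
  · rw [min_eq_right ((unit_le_unit hn b a).mpr h), min_eq_right h]

lemma θc_sub_pi (hn : 5*k+5 ≤ n) (j : Fin n) (hjs : 4*n ≤ cc k n j) :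
    θc k n j - π = ((cc k n j - 4*n : ℕ):ℝ) * (π / (4*n)) := by
  rw [Nat.cast_sub hjs, sub_mul, ← pi_eq_unit hn]
  rfl

lemma cc_lt_8n (hn : 5*k+5 ≤ n) (j : Fin n) : cc k n j < 8*n := by
  have := j.isLt
  rcases cc_cases (k := k) j with ⟨-, b⟩ | ⟨-, b⟩ <;> rw [b] <;> omega

lemma blockSet_count (hn : 5*k+5 ≤ n) (i j : Fin n) (hjs : 4*n ≤ cc k n j)
    (a b : ℕ) (hb : b ≤ n)
    (hiff : ∀ m : Fin n,
      (((m:ℕ) < (i:ℕ) ∧ min (cc k n i) (cc k n j - 4*n) ≤ cc k n m) ∨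
       ((m:ℕ) < (j:ℕ) ∧ (m:ℕ) ≠ (i:ℕ) ∧
          min (cc k n i) (cc k n j - 4*n) + 4*n ≤ cc k n m))
      ↔ (a ≤ (m:ℕ) ∧ (m:ℕ) < b)) :
    (blockSet (θc k n) i j (min (θc k n i) (θc k n j - π))).ncard = b - a := by
  have hUlt : min (cc k n i) (cc k n j - 4*n) < 4*n :=
    lt_of_le_of_lt (min_le_right _ _) (by have := cc_lt_8n hn j; omega)
  have hmin : min (θc k n i) (θc k n j - π) =
      ((min (cc k n i) (cc k n j - 4*n) : ℕ):ℝ) * (π / (4*n)) := by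
    rw [θc_sub_pi hn j hjs]
    exact unit_min hn _ _
  rw [hmin, blockSet_c hn i j _ hUlt]
  have hset : {m : Fin n | ((m : ℕ) < (i : ℕ) ∧ min (cc k n i) (cc k n j - 4*n) ≤ cc k n m) ∨
      ((m : ℕ) < (j : ℕ) ∧ (m : ℕ) ≠ (i : ℕ) ∧
        min (cc k n i) (cc k n j - 4*n) + 4*n ≤ cc k n m)}
      = {m : Fin n | a ≤ (m:ℕ) ∧ (m:ℕ) < b} := by
    ext m
    exact hiff m
  rw [hset, ncard_val_Ico _ _ hb]

lemma constr_adj (hn : 5*k+5 ≤ n) (i j : Fin n) (hij : i < j) :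
    (semiArcGraph k (θc k n)).Adj i j ↔
      (((j:ℕ) < 2*k+2 ∧ (j:ℕ) ≤ (i:ℕ)+k+1) ∨
       ((i:ℕ) < 2*k+2 ∧ 2*k+2 ≤ (j:ℕ) ∧ (j:ℕ) ≤ (i:ℕ)+3*k+3) ∨
       (2*k+2 ≤ (i:ℕ) ∧ ((i:ℕ) ≤ 3*k+2 ∨ (j:ℕ) ≤ (i:ℕ)+k+1))) := by
  have hv : (i:ℕ) < (j:ℕ) := hij
  have hjlt := j.isLt
  have hilt := i.isLt
  rw [adj_iff (θc k n) (θc_mem hn) i j hij, radSet_count hn i j hij]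
  by_cases hjs : (j:ℕ) < 2*k+2
  · have hcj : cc k n j = 2*(j:ℕ)+2 := by rw [cc, if_pos hjs]
    have h1 : ¬ (π ≤ θc k n j) := by
      rw [pi_le_θc hn, hcj]; omega
    simp only [h1, false_and, or_false]
    omega
  · push_neg at hjs
    have hcj : cc k n j = 2*(j:ℕ) + (4*n - (4*k+4)) + 1 := by
      rw [cc, if_neg (by omega)]
    have hπ : π ≤ θc k n j := by
      rw [pi_le_θc hn, hcj]; omega
    have hcc4n : 4*n ≤ cc k n j := by rw [hcj]; omega
    simp only [hπ, true_and]
    by_cases his : (i:ℕ) < 2*k+2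
    · have hci : cc k n i = 2*(i:ℕ)+2 := by rw [cc, if_pos his]
      by_cases hit : (i:ℕ) + 1 ≤ (j:ℕ) - (2*k+2)
      · have hminv : min (cc k n i) (cc k n j - 4*n) = 2*(i:ℕ)+2 := by
          rw [hci, hcj]; omega
        rw [blockSet_count hn i j hcc4n ((2*k+2)+(i:ℕ)+1) (j:ℕ) (le_of_lt hjlt)
          (fun m => by
            rcases cc_cases (k := k) m with ⟨hm1, hm2⟩ | ⟨hm1, hm2⟩ <;>
              rw [hminv, hm2] <;> omega)]
        omega
      · have hminv : min (cc k n i) (cc k n j - 4*n) = cc k n j - 4*n := by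
          rw [hci, hcj]; omega
        rw [blockSet_count hn i j hcc4n ((j:ℕ) - (2*k+2)) (i:ℕ) (le_of_lt hilt)
          (fun m => by
            rcases cc_cases (k := k) m with ⟨hm1, hm2⟩ | ⟨hm1, hm2⟩ <;>
              rw [hminv, hm2, hcj] <;> omega)]
        omega
    · push_neg at his
      have hci : cc k n i = 2*(i:ℕ) + (4*n - (4*k+4)) + 1 := by
        rw [cc, if_neg (by omega)]
      have hminv : min (cc k n i) (cc k n j - 4*n) = cc k n j - 4*n := by
        rw [hci, hcj]; omega
      rw [blockSet_count hn i j hcc4n (min ((j:ℕ) - (2*k+2)) (2*k+2)) (i:ℕ)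
        (le_of_lt hilt)
        (fun m => by
          rcases cc_cases (k := k) m with ⟨hm1, hm2⟩ | ⟨hm1, hm2⟩ <;>
            rw [hminv, hm2, hcj] <;> omega)]
      omega

end SemiArcAux
end Part6
section Part7
open Finset
namespace SemiArcAux

/-- adjacency condition of the construction, arithmetically -/
def Acond (k a b : ℕ) : Prop :=
  (b < 2*k+2 ∧ b ≤ a+k+1) ∨ (a < 2*k+2 ∧ 2*k+2 ≤ b ∧ b ≤ a+3*k+3) ∨
  (2*k+2 ≤ a ∧ (a ≤ 3*k+2 ∨ b ≤ a+k+1))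

instance (k a b : ℕ) : Decidable (Acond k a b) := by unfold Acond; infer_instance

variable {n k : ℕ}

/-- the ordered-pair edge Finset in ℕ-land -/
def pairsP (k n : ℕ) : Finset (ℕ × ℕ) :=
  (Finset.range n ×ˢ Finset.range n).filter (fun p => p.1 < p.2 ∧ Acond k p.1 p.2)

lemma constr_card (hn : 5*k+5 ≤ n)
    [inst : DecidablePred fun p : Fin n × Fin n =>
      p.1 < p.2 ∧ (semiArcGraph k (θc k n)).Adj p.1 p.2] :
    (Finset.univ.filter (fun p : Fin n × Fin n =>
      p.1 < p.2 ∧ (semiArcGraph k (θc k n)).Adj p.1 p.2)).card = (pairsP k n).card := by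
  apply Finset.card_bij (fun p _ => (((p.1 : Fin n) : ℕ), ((p.2 : Fin n) : ℕ)))
  · intro p hp
    simp only [mem_filter, mem_univ, true_and] at hp
    simp only [pairsP, mem_filter, mem_product, mem_range]
    refine ⟨⟨p.1.isLt, p.2.isLt⟩, hp.1, ?_⟩
    have := (constr_adj hn p.1 p.2 hp.1).mp hp.2
    exact this
  · intro p hp q hq hpq
    simp only [Prod.mk.injEq] at hpq
    exact Prod.ext (Fin.ext hpq.1) (Fin.ext hpq.2)
  · intro q hq
    simp only [pairsP, mem_filter, mem_product, mem_range] at hq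
    obtain ⟨⟨h1, h2⟩, h3, h4⟩ := hq
    refine ⟨(⟨q.1, h1⟩, ⟨q.2, h2⟩), ?_, rfl⟩
    simp only [mem_filter, mem_univ, true_and]
    have hlt : (⟨q.1, h1⟩ : Fin n) < ⟨q.2, h2⟩ := h3
    exact ⟨hlt, (constr_adj hn _ _ hlt).mpr h4⟩

/-- fiber description -/
def fiberSet (k n i : ℕ) : Finset ℕ :=
  if i < 2*k+2 then
    Finset.Ico (i+1) (min (i+k+2) (2*k+2)) ∪ Finset.Ico (2*k+2) (i+3*k+4)
  else if i ≤ 3*k+2 then Finset.Ico (i+1) n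
  else Finset.Ico (i+1) (min (i+k+2) n)

lemma fiber_eq (hn : 5*k+5 ≤ n) (i : ℕ) (hi : i < n) :
    (pairsP k n).filter (fun p => p.1 = i) = (fiberSet k n i).image (fun j => (i, j)) := by
  ext q
  simp only [pairsP, fiberSet, mem_filter, mem_product, mem_range, mem_image]
  constructor
  · rintro ⟨⟨⟨ha, hb⟩, hc, hd⟩, he⟩
    refine ⟨q.2, ?_, by rw [← he]⟩
    subst he
    unfold Acond at hd
    split_ifs with h1 h2 <;> simp only [Finset.mem_union, Finset.mem_Ico] <;> omega
  · rintro ⟨j, hj, he⟩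
    have hq1 : q.1 = i := by rw [← he]
    have hq2 : q.2 = j := by rw [← he]
    subst hq1; subst hq2
    split_ifs at hj with h1 h2 <;>
      simp only [Finset.mem_union, Finset.mem_Ico] at hj <;>
      refine ⟨⟨⟨by omega, by omega⟩, by omega, ?_⟩, rfl⟩ <;>
      unfold Acond <;> omega
  
lemma fiber_card (hn : 5*k+5 ≤ n) (i : ℕ) (hi : i < n) :
    ((pairsP k n).filter (fun p => p.1 = i)).card =
      if i < 2*k+2 then (min (i+k+2) (2*k+2) - (i+1)) + (i+k+2)
      else if i ≤ 3*k+2 then n - i - 1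
      else min (i+k+2) n - (i+1) := by
  rw [fiber_eq hn i hi, Finset.card_image_of_injective _ (fun a b h => by
    simpa using h)]
  unfold fiberSet
  split_ifs with h1 h2
  · rw [Finset.card_union_of_disjoint (by
      rw [Finset.disjoint_left]
      intro a ha hb
      simp only [Finset.mem_Ico] at ha hb
      omega)]
    rw [Nat.card_Ico, Nat.card_Ico]
    omega
  · rw [Nat.card_Ico]; omega
  · rw [Nat.card_Ico]

lemma pairsP_card (hn : 5*k+5 ≤ n) :
    2 * (pairsP k n).card = (k+1) * (4*n - k - 2) := by
  classical
  have h0 : (pairsP k n).card = ∑ i ∈ Finset.range n,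
      ((pairsP k n).filter (fun p => p.1 = i)).card := by
    apply Finset.card_eq_sum_card_fiberwise
    intro p hp
    simp only [Finset.mem_coe, pairsP, mem_filter, mem_product, mem_range] at hp
    simp [hp.1.1]
  rw [h0]
  have h1 : ∀ i ∈ Finset.range n, ((pairsP k n).filter (fun p => p.1 = i)).card =
      if i < 2*k+2 then (min (i+k+2) (2*k+2) - (i+1)) + (i+k+2)
      else if i ≤ 3*k+2 then n - i - 1
      else min (i+k+2) n - (i+1) := by
    intro i hi
    exact fiber_card hn i (Finset.mem_range.mp hi)
  rw [Finset.sum_congr rfl h1]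
  obtain ⟨M, hM⟩ : ∃ M, n = M + (4*k+4) := ⟨n - (4*k+4), by omega⟩
  have hM1 : k + 1 ≤ M := by omega
  have hsplit : ∀ (f : ℕ → ℕ), ∑ i ∈ Finset.range n, f i =
      ∑ i ∈ Finset.Ico 0 (k+1), f i + ∑ i ∈ Finset.Ico (k+1) (2*k+2), f i +
      ∑ i ∈ Finset.Ico (2*k+2) (3*k+3), f i + ∑ i ∈ Finset.Ico (3*k+3) (n-(k+1)), f i +
      ∑ i ∈ Finset.Ico (n-(k+1)) n, f i := by
    intro f
    rw [Finset.range_eq_Ico,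
      ← Finset.sum_Ico_consecutive f (by omega : 0 ≤ k+1) (by omega : k+1 ≤ n),
      ← Finset.sum_Ico_consecutive f (by omega : (k+1:ℕ) ≤ 2*k+2) (by omega : 2*k+2 ≤ n),
      ← Finset.sum_Ico_consecutive f (by omega : (2*k+2:ℕ) ≤ 3*k+3) (by omega : 3*k+3 ≤ n),
      ← Finset.sum_Ico_consecutive f (by omega : (3*k+3:ℕ) ≤ n-(k+1)) (by omega : n-(k+1) ≤ n)]
    ring
  rw [hsplit]
  set G := ∑ x ∈ Finset.range (k+1), x with hGdef
  have hG2 : G * 2 = (k+1) * k := by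
    rw [hGdef, Finset.sum_range_id_mul_two (k+1), Nat.add_sub_cancel]
  -- segment 1
  have hs1 : ∑ i ∈ Finset.Ico 0 (k+1),
      (if i < 2*k+2 then (min (i+k+2) (2*k+2) - (i+1)) + (i+k+2)
       else if i ≤ 3*k+2 then n - i - 1 else min (i+k+2) n - (i+1))
      = G + (k+1)*(2*k+3) := by
    rw [Finset.sum_Ico_eq_sum_range]
    rw [Finset.sum_congr rfl (g := fun x => x + (2*k+3)) (fun x hx => by
      rw [Finset.mem_range] at hx
      rw [if_pos (by omega)]
      beta_reduce
      omega)]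
    rw [Finset.sum_add_distrib, Finset.sum_const, Finset.card_range, smul_eq_mul]
    congr 1
  -- segment 2
  have hs2 : ∑ i ∈ Finset.Ico (k+1) (2*k+2),
      (if i < 2*k+2 then (min (i+k+2) (2*k+2) - (i+1)) + (i+k+2)
       else if i ≤ 3*k+2 then n - i - 1 else min (i+k+2) n - (i+1))
      = (k+1)*(3*k+3) := by
    rw [Finset.sum_Ico_eq_sum_range]
    rw [Finset.sum_congr rfl (g := fun _ => 3*k+3) (fun x hx => by
      rw [Finset.mem_range] at hx
      rw [if_pos (by omega)]
      beta_reduce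
      omega)]
    rw [Finset.sum_const, Finset.card_range, smul_eq_mul]
    congr 1
    omega
  -- segment 3
  have hs3 : ∑ i ∈ Finset.Ico (2*k+2) (3*k+3),
      (if i < 2*k+2 then (min (i+k+2) (2*k+2) - (i+1)) + (i+k+2)
       else if i ≤ 3*k+2 then n - i - 1 else min (i+k+2) n - (i+1))
      = (k+1)*(M+k+1) + G := by
    rw [Finset.sum_Ico_eq_sum_range, ← Finset.sum_range_reflect]
    have hc : 3*k+3 - (2*k+2) = k+1 := by omega
    rw [hc]
    rw [Finset.sum_congr rfl (g := fun x => (M+k+1) + x) (fun x hx => by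
      rw [Finset.mem_range] at hx
      rw [if_neg (by omega), if_pos (by omega)]
      beta_reduce
      omega)]
    rw [Finset.sum_add_distrib, Finset.sum_const, Finset.card_range, smul_eq_mul]
  -- segment 4
  have hs4 : ∑ i ∈ Finset.Ico (3*k+3) (n-(k+1)),
      (if i < 2*k+2 then (min (i+k+2) (2*k+2) - (i+1)) + (i+k+2)
       else if i ≤ 3*k+2 then n - i - 1 else min (i+k+2) n - (i+1))
      = M * (k+1) := by
    rw [Finset.sum_Ico_eq_sum_range]
    have hc : n - (k+1) - (3*k+3) = M := by omega
    rw [hc]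
    rw [Finset.sum_congr rfl (g := fun _ => k+1) (fun x hx => by
      rw [Finset.mem_range] at hx
      rw [if_neg (by omega), if_neg (by omega)]
      rw [min_eq_left (by omega)]
      beta_reduce
      omega)]
    rw [Finset.sum_const, Finset.card_range, smul_eq_mul]
  -- segment 5
  have hs5 : ∑ i ∈ Finset.Ico (n-(k+1)) n,
      (if i < 2*k+2 then (min (i+k+2) (2*k+2) - (i+1)) + (i+k+2)
       else if i ≤ 3*k+2 then n - i - 1 else min (i+k+2) n - (i+1))
      = G := by
    rw [Finset.sum_Ico_eq_sum_range, ← Finset.sum_range_reflect]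
    have hc : n - (n - (k+1)) = k+1 := by omega
    rw [hc]
    rw [Finset.sum_congr rfl (g := fun x => x) (fun x hx => by
      rw [Finset.mem_range] at hx
      rw [if_neg (by omega), if_neg (by omega)]
      rw [min_eq_right (by omega)]
      beta_reduce
      omega)]
  rw [hs1, hs2, hs3, hs4, hs5]
  have hsub : 4*n - k - 2 = 4*M + 15*k + 14 := by omega
  rw [hsub]
  calc 2 * (G + (k+1)*(2*k+3) + ((k+1)*(3*k+3)) + ((k+1)*(M+k+1) + G) + M*(k+1) + G)
      = 3*(G*2) + (k+1)*((4*k+6) + (6*k+6) + (2*M+2*k+2) + 2*M) := by ring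
    _ = 3*((k+1)*k) + (k+1)*((4*k+6) + (6*k+6) + (2*M+2*k+2) + 2*M) := by rw [hG2]
    _ = (k+1) * (4*M + 15*k + 14) := by ring

theorem construction (k n : ℕ) (hn : 5*k+5 ≤ n) :
    ∃ θ : Fin n → ℝ, Function.Injective θ ∧
      (∀ i, θ i ∈ Set.Ioo (0 : ℝ) (2 * π)) ∧
      2 * (semiArcGraph k θ).edgeSet.ncard = (k + 1) * (4 * n - k - 2) := by
  classical
  refine ⟨θc k n, θc_inj hn, θc_mem hn, ?_⟩
  rw [@edgeSet_ncard n (semiArcGraph k (θc k n)) (Classical.decRel _), constr_card hn,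
    pairsP_card hn]

end SemiArcAux
end Part7

/-- The maximum number of edges in a semi-arc `k`-visibility graph with
`n ≥ 5k + 5` vertices is `(k+1)(2n - (k+2)/2) = (k+1)(4n - k - 2)/2`, and this
bound is optimal.  (Stated multiplied by 2 to avoid division.) -/
theorem semiArc_k_visibility_max_edges (k n : ℕ) (hn : 5 * k + 5 ≤ n) :
    (∀ θ : Fin n → ℝ, Function.Injective θ →
        (∀ i, θ i ∈ Set.Ioo (0 : ℝ) (2 * π)) →
        2 * (semiArcGraph k θ).edgeSet.ncard ≤ (k + 1) * (4 * n - k - 2)) ∧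
    (∃ θ : Fin n → ℝ, Function.Injective θ ∧
        (∀ i, θ i ∈ Set.Ioo (0 : ℝ) (2 * π)) ∧
        2 * (semiArcGraph k θ).edgeSet.ncard = (k + 1) * (4 * n - k - 2)) := by
  constructor
  · intro θ hinj hθ
    exact SemiArcAux.upper_bound k n hn θ hinj hθ
  · exact SemiArcAux.construction k n hn
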